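/- For a simple symmetric random walk on ℤ, almost surely there are infinitely many times n at which the favourite site is unique, i.e. ℙ{#𝕍(n) = 1 infinitely often} = 1. -/

import Mathlib

open MeasureTheory ProbabilityTheory

/-- Local time: `ξ(n,x) = #{0 ≤ k ≤ n : S(k) = x}`. -/
def localTime (S : ℕ → ℤ) (n : ℕ) (x : ℤ) : ℕ :=
  ((Finset.range (n + 1)).filter (fun k => S k = x)).card

/-- Maximum local time: `ξ*(n) = max_{y ∈ ℤ} ξ(n,y)`. -/
noncomputable def maxLocalTime (S : ℕ → ℤ) (n : ℕ) : ℕ :=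
  ⨆ y : ℤ, localTime S n y

/-- Set of favourite sites: `𝕍(n) = {x ∈ ℤ : ξ(n,x) = max_y ξ(n,y)}`. -/
def favSites (S : ℕ → ℤ) (n : ℕ) : Set ℤ :=
  {x : ℤ | localTime S n x = maxLocalTime S n}

open Filter Set

lemma localTime_succ (f : ℕ → ℤ) (n : ℕ) (y : ℤ) :
    localTime f (n+1) y = localTime f n y + if f (n+1) = y then 1 else 0 := by
  unfold localTime
  rw [Finset.range_add_one, Finset.filter_insert]
  split_ifs with h
  · rw [Finset.card_insert_of_notMem (by simp), add_comm]
  · rfl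

lemma localTime_le (f : ℕ → ℤ) (n : ℕ) (y : ℤ) : localTime f n y ≤ n + 1 :=
  le_trans (Finset.card_filter_le _ _) (by simp)

lemma localTime_bdd (f : ℕ → ℤ) (n : ℕ) :
    BddAbove (Set.range fun y => localTime f n y) :=
  ⟨n + 1, by rintro _ ⟨y, rfl⟩; exact localTime_le f n y⟩

lemma le_maxLocalTime (f : ℕ → ℤ) (n : ℕ) (y : ℤ) :
    localTime f n y ≤ maxLocalTime f n :=
  le_ciSup (localTime_bdd f n) y

lemma exists_maxLocalTime (f : ℕ → ℤ) (n : ℕ) :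
    ∃ y, localTime f n y = maxLocalTime f n := by
  have h : maxLocalTime f n ∈ Set.range (fun y => localTime f n y) :=
    Nat.sSup_mem ⟨_, Set.mem_range_self 0⟩ (localTime_bdd f n)
  obtain ⟨y, hy⟩ := h
  exact ⟨y, hy⟩

lemma maxLocalTime_mono (f : ℕ → ℤ) : Monotone (maxLocalTime f) := by
  apply monotone_nat_of_le_succ
  intro n
  obtain ⟨y, hy⟩ := exists_maxLocalTime f n
  calc maxLocalTime f n = localTime f n y := hy.symm
    _ ≤ localTime f (n+1) y := by rw [localTime_succ]; exact Nat.le_add_right _ _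
    _ ≤ maxLocalTime f (n+1) := le_maxLocalTime f (n+1) y

lemma maxLocalTime_succ_le (f : ℕ → ℤ) (n : ℕ) :
    maxLocalTime f (n+1) ≤ maxLocalTime f n + 1 := by
  apply ciSup_le
  intro y
  rw [localTime_succ]
  have := le_maxLocalTime f n y
  split_ifs <;> omega

lemma favSites_of_increase (f : ℕ → ℤ) (n : ℕ)
    (h : maxLocalTime f n + 1 ≤ maxLocalTime f (n+1)) :
    favSites f (n+1) = {f (n+1)} := by
  have heq : maxLocalTime f (n+1) = maxLocalTime f n + 1 :=
    le_antisymm (maxLocalTime_succ_le f n) h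
  have key : ∀ x, x ≠ f (n+1) → localTime f (n+1) x < maxLocalTime f (n+1) := by
    intro x hx
    rw [localTime_succ, if_neg (fun hc => hx hc.symm), add_zero, heq]
    exact Nat.lt_succ_of_le (le_maxLocalTime f n x)
  ext x
  simp only [favSites, Set.mem_setOf_eq, Set.mem_singleton_iff]
  constructor
  · intro hx
    by_contra hne
    exact absurd hx (Nat.ne_of_lt (key x hne))
  · rintro rfl
    obtain ⟨y, hy⟩ := exists_maxLocalTime f (n+1)
    by_cases hy' : y = f (n+1)
    · rw [← hy', hy]
    · exact absurd hy (Nat.ne_of_lt (key y hy'))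

lemma localTime_unbounded (f : ℕ → ℤ) (x : ℤ) (hx : {n | f n = x}.Infinite) :
    ∀ m : ℕ, ∃ n, m ≤ localTime f n x := by
  intro m
  induction m with
  | zero => exact ⟨0, Nat.zero_le _⟩
  | succ m ih =>
    obtain ⟨n, hn⟩ := ih
    obtain ⟨k, hk_mem, hk_gt⟩ := hx.exists_gt n
    refine ⟨k, ?_⟩
    have hsub : insert k ((Finset.range (n+1)).filter (fun j => f j = x)) ⊆
        (Finset.range (k+1)).filter (fun j => f j = x) := by
      apply Finset.insert_subset
      · simp only [Finset.mem_filter, Finset.mem_range]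
        exact ⟨Nat.lt_succ_self k, hk_mem⟩
      · apply Finset.filter_subset_filter
        exact Finset.range_subset_range.mpr (by omega)
    have hnot : k ∉ (Finset.range (n+1)).filter (fun j => f j = x) := by
      simp only [Finset.mem_filter, Finset.mem_range]
      omega
    have := Finset.card_le_card hsub
    rw [Finset.card_insert_of_notMem hnot] at this
    unfold localTime at hn ⊢
    omega

lemma det_main (f : ℕ → ℤ) (hx : ∃ x, {n | f n = x}.Infinite) :
    {n : ℕ | (favSites f n).ncard = 1}.Infinite := by
  obtain ⟨x, hx⟩ := hx
  apply Set.infinite_of_not_bddAbove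
  rintro ⟨N, hN⟩
  have hconst : ∀ n, N + 1 ≤ n → maxLocalTime f n = maxLocalTime f (N+1) := by
    intro n hn
    induction n, hn using Nat.le_induction with
    | base => rfl
    | succ n hn ih =>
      have hnot : maxLocalTime f (n+1) ≤ maxLocalTime f n := by
        by_contra hc
        push_neg at hc
        have huniq := favSites_of_increase f n hc
        have : n + 1 ∈ {n : ℕ | (favSites f n).ncard = 1} := by
          simp only [Set.mem_setOf_eq, huniq, Set.ncard_singleton]
        have := hN this
        omega
      have := maxLocalTime_mono f (by omega : n ≤ n + 1)
      omega
  obtain ⟨n', hn'⟩ := localTime_unbounded f x hx (maxLocalTime f (N+1) + 1)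
  have h1 : maxLocalTime f (N+1) + 1 ≤ maxLocalTime f n' :=
    le_trans hn' (le_maxLocalTime f n' x)
  have h2 : maxLocalTime f n' ≤ maxLocalTime f (max n' (N+1)) :=
    maxLocalTime_mono f (le_max_left _ _)
  rw [hconst _ (le_max_right _ _)] at h2
  omega

lemma coverage (f : ℕ → ℤ) (hstep : ∀ n, f (n+1) - f n = 1 ∨ f (n+1) - f n = -1)
    (hnot : ∀ x, ¬ {n | f n = x}.Infinite) :
    Tendsto f atTop atTop ∨ Tendsto f atTop atBot := by
  have habs : Tendsto (fun n => |f n|) atTop atTop := by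
    rw [tendsto_atTop_atTop]
    intro b
    have hfin : {n | |f n| ≤ b}.Finite := by
      have hsub : {n | |f n| ≤ b} ⊆ ⋃ x ∈ ((Finset.Icc (-b) b : Finset ℤ) : Set ℤ),
          {n | f n = x} := by
        intro n hn
        simp only [Set.mem_setOf_eq, abs_le] at hn
        simp only [Set.mem_iUnion, Finset.coe_Icc, Set.mem_Icc, Set.mem_setOf_eq]
        exact ⟨f n, ⟨hn.1, hn.2⟩, rfl⟩
      exact Set.Finite.subset (Set.Finite.biUnion (Finset.finite_toSet _)
        (fun x _ => Set.not_infinite.mp (hnot x))) hsub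
    obtain ⟨N, hNbd⟩ := hfin.bddAbove
    refine ⟨N + 1, fun n hn => ?_⟩
    by_contra hc
    push_neg at hc
    have : n ∈ {n | |f n| ≤ b} := le_of_lt hc
    have := hNbd this
    omega
  have h1 : ∀ᶠ n in atTop, 1 ≤ |f n| := habs.eventually_ge_atTop 1
  obtain ⟨N, hN⟩ := eventually_atTop.mp h1
  by_cases hpos : 0 < f N
  · left
    have hppos : ∀ n, N ≤ n → 0 < f n := by
      intro n hn
      induction n, hn using Nat.le_induction with
      | base => exact hpos
      | succ n hn ih =>
        have hs := hstep n
        have habs1 : 1 ≤ |f (n+1)| := hN (n+1) (by omega)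
        rcases le_or_gt (f (n+1)) 0 with hle | hlt
        · exfalso
          have h2 : |f (n+1)| = -f (n+1) := abs_of_nonpos hle
          omega
        · exact hlt
    apply habs.congr'
    filter_upwards [eventually_ge_atTop N] with n hn
    exact abs_of_pos (hppos n hn)
  · right
    have hneg : f N < 0 := by
      have := hN N le_rfl
      rcases lt_trichotomy (f N) 0 with h | h | h
      · exact h
      · rw [h] at this; simp at this
      · exact absurd h hpos
    have hpneg : ∀ n, N ≤ n → f n < 0 := by
      intro n hn
      induction n, hn using Nat.le_induction with
      | base => exact hneg
      | succ n hn ih =>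
        have hs := hstep n
        have habs1 : 1 ≤ |f (n+1)| := hN (n+1) (by omega)
        rcases le_or_gt 0 (f (n+1)) with hle | hlt
        · exfalso
          have : |f (n+1)| = f (n+1) := abs_of_nonneg hle
          omega
        · exact hlt
    rw [← tendsto_neg_atTop_iff]
    apply habs.congr'
    filter_upwards [eventually_ge_atTop N] with n hn
    exact abs_of_neg (hpneg n hn)

section Prob

variable {Ω : Type*}

/-- Measurability of the tendsto-to-atTop event. -/
lemma measurableSet_tendsto_atTop'' {m : MeasurableSpace Ω} (u : ℕ → Ω → ℤ)
    (hu : ∀ n, Measurable[m] (u n)) :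
    MeasurableSet[m] {ω | Tendsto (fun n => u n ω) atTop atTop} := by
  have heq : {ω | Tendsto (fun n => u n ω) atTop atTop}
      = ⋂ b : ℤ, ⋃ N : ℕ, ⋂ n : ℕ, ⋂ (_ : N ≤ n), {ω | b ≤ u n ω} := by
    ext ω
    simp only [Set.mem_setOf_eq, Set.mem_iInter, Set.mem_iUnion, tendsto_atTop_atTop]
  rw [heq]
  refine MeasurableSet.iInter fun b => MeasurableSet.iUnion fun N =>
    MeasurableSet.iInter fun n => MeasurableSet.iInter fun _ => ?_
  exact (hu n) measurableSet_Ici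

variable [MeasurableSpace Ω] (P : Measure Ω) [IsProbabilityMeasure P]
variable (X : ℕ → Ω → ℤ)

/-- Splitting a measure along the a.s. partition `{X n = 1} ∪ {X n = -1}`. -/
lemma measure_split (hmeas : ∀ n, Measurable (X n))
    (hdist : ∀ n, P {ω | X n ω = 1} = 1/2 ∧ P {ω | X n ω = -1} = 1/2)
    (n : ℕ) {B : Set Ω} (hB : MeasurableSet B) :
    P B = P (B ∩ {ω | X n ω = 1}) + P (B ∩ {ω | X n ω = -1}) := by
  have h1 : MeasurableSet {ω | X n ω = 1} := (hmeas n) (measurableSet_singleton 1)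
  have h2 : MeasurableSet {ω | X n ω = -1} := (hmeas n) (measurableSet_singleton (-1))
  have hdisj : Disjoint {ω | X n ω = 1} {ω | X n ω = -1} := by
    rw [Set.disjoint_left]
    intro ω hω1 hω2
    simp only [Set.mem_setOf_eq] at hω1 hω2
    omega
  have hunion : P ({ω | X n ω = 1} ∪ {ω | X n ω = -1}) = 1 := by
    rw [measure_union hdisj h2, (hdist n).1, (hdist n).2]
    rw [one_div]
    exact ENNReal.inv_two_add_inv_two
  have hcompl : P ({ω | X n ω = 1} ∪ {ω | X n ω = -1})ᶜ = 0 := by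
    rw [measure_compl (h1.union h2) (measure_ne_top _ _), hunion, measure_univ]
    simp
  have hB' : P B = P (B ∩ ({ω | X n ω = 1} ∪ {ω | X n ω = -1})) :=
    (measure_inter_conull hcompl).symm
  rw [hB', Set.inter_union_distrib_left,
    measure_union (hdisj.mono Set.inter_subset_right Set.inter_subset_right) (hB.inter h2)]

/-- The law of `-X n` equals the law of `X n`. -/
lemma map_neg_eq (hmeas : ∀ n, Measurable (X n))
    (hdist : ∀ n, P {ω | X n ω = 1} = 1/2 ∧ P {ω | X n ω = -1} = 1/2) (n : ℕ) :
    Measure.map (fun ω => -X n ω) P = Measure.map (X n) P := by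
  have hmn : Measurable (fun ω => -X n ω) := (hmeas n).neg
  classical
  ext A hA
  rw [Measure.map_apply hmn hA, Measure.map_apply (hmeas n) hA]
  have gen : ∀ (h : Ω → ℤ) (c v : ℤ), (∀ ω, X n ω = c → h ω = v) →
      h ⁻¹' A ∩ {ω | X n ω = c} = if v ∈ A then {ω | X n ω = c} else ∅ := by
    intro h c v himp
    split_ifs with hv
    · ext ω
      simp only [Set.mem_inter_iff, Set.mem_preimage, Set.mem_setOf_eq]
      exact ⟨fun h' => h'.2, fun h' => ⟨by rw [himp ω h']; exact hv, h'⟩⟩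
    · ext ω
      simp only [Set.mem_inter_iff, Set.mem_preimage, Set.mem_setOf_eq,
        Set.mem_empty_iff_false, iff_false, not_and]
      intro h1 h2
      rw [himp ω h2] at h1
      exact hv h1
  have e1 := gen (fun ω => -X n ω) 1 (-1) (by intro ω h; simp [h])
  have e2 := gen (fun ω => -X n ω) (-1) 1 (by intro ω h; simp [h])
  have e3 := gen (X n) 1 1 (fun ω h => h)
  have e4 := gen (X n) (-1) (-1) (fun ω h => h)
  rw [measure_split P X hmeas hdist n (hmn hA), measure_split P X hmeas hdist n ((hmeas n) hA),
    e1, e2, e3, e4]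
  rcases hdist n with ⟨hd1, hd2⟩
  split_ifs <;> simp [hd1, hd2, add_comm]

/-- Law of a finite tuple of independent random variables is the product of marginals. -/
lemma map_tuple_eq_pi (hmeas : ∀ n, Measurable (X n))
    (hindep : iIndepFun X P) (s : Finset ℕ) :
    Measure.map (fun ω (i : s) => X i ω) P
      = Measure.pi (fun i : s => Measure.map (X (i : ℕ)) P) := by
  classical
  haveI : ∀ i : s, IsProbabilityMeasure (Measure.map (X (i : ℕ)) P) :=
    fun i => Measure.isProbabilityMeasure_map (hmeas (i : ℕ)).aemeasurable
  have htuple : Measurable (fun ω (i : s) => X i ω) :=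
    measurable_pi_lambda _ (fun i => hmeas (i : ℕ))
  refine (Measure.pi_eq fun t ht => ?_).symm
  rw [Measure.map_apply htuple (MeasurableSet.univ_pi ht)]
  set sets : ∀ i : ℕ, Set ℤ := fun i => if h : i ∈ s then t ⟨i, h⟩ else Set.univ with hsets
  have hpre : (fun ω (i : s) => X i ω) ⁻¹' (Set.pi Set.univ t)
      = ⋂ i ∈ s, X i ⁻¹' sets i := by
    ext ω
    simp only [Set.mem_preimage, Set.mem_pi, Set.mem_univ, forall_true_left, Set.mem_iInter,
      hsets]
    constructor
    · intro h i hi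
      simp only [Set.mem_preimage, dif_pos hi]
      exact h ⟨i, hi⟩
    · intro h i
      have := h (i : ℕ) i.2
      simpa only [Set.mem_preimage, dif_pos i.2] using this
  rw [hpre, hindep.measure_inter_preimage_eq_mul s
    (fun i hi => by simp only [hsets, dif_pos hi]; exact ht ⟨i, hi⟩)]
  rw [← Finset.prod_attach s (fun i => P (X i ⁻¹' sets i))]
  refine Finset.prod_congr rfl fun i _ => ?_
  rw [Measure.map_apply (hmeas (i : ℕ)) (ht i)]
  congr 1
  simp only [hsets, dif_pos i.2]

/-- Sign symmetry of the path law. -/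
lemma map_path_symm (hmeas : ∀ n, Measurable (X n))
    (hindep : iIndepFun X P)
    (hdist : ∀ n, P {ω | X n ω = 1} = 1/2 ∧ P {ω | X n ω = -1} = 1/2) :
    Measure.map (fun ω (n : ℕ) => X n ω) P = Measure.map (fun ω (n : ℕ) => -X n ω) P := by
  have hmeasY : ∀ n, Measurable (fun ω => -X n ω) := fun n => (hmeas n).neg
  have hindepY : iIndepFun (fun n ω => -X n ω) P :=
    hindep.comp (fun _ => Neg.neg) (fun _ => measurable_neg)
  have hφ : Measurable (fun ω (n : ℕ) => X n ω) := measurable_pi_lambda _ hmeas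
  have hψ : Measurable (fun ω (n : ℕ) => -X n ω) := measurable_pi_lambda _ hmeasY
  haveI : IsProbabilityMeasure (Measure.map (fun ω (n : ℕ) => X n ω) P) :=
    Measure.isProbabilityMeasure_map hφ.aemeasurable
  haveI : IsProbabilityMeasure (Measure.map (fun ω (n : ℕ) => -X n ω) P) :=
    Measure.isProbabilityMeasure_map hψ.aemeasurable
  refine ext_of_generate_finite _ generateFrom_measurableCylinders.symm
    isPiSystem_measurableCylinders (fun t ht => ?_) (by simp)
  obtain ⟨u, A, hA, rfl⟩ := (mem_measurableCylinders t).mp ht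
  rw [Measure.map_apply hφ (hA.cylinder), Measure.map_apply hψ (hA.cylinder)]
  have h1 : (fun ω (n : ℕ) => X n ω) ⁻¹' cylinder u A = (fun ω (i : u) => X i ω) ⁻¹' A := rfl
  have h2 : (fun ω (n : ℕ) => -X n ω) ⁻¹' cylinder u A
      = (fun ω (i : u) => -X (i : ℕ) ω) ⁻¹' A := rfl
  have htupleX : Measurable (fun ω (i : u) => X i ω) :=
    measurable_pi_lambda _ (fun i => hmeas (i : ℕ))
  have htupleY : Measurable (fun ω (i : u) => -X (i : ℕ) ω) :=
    measurable_pi_lambda _ (fun i => hmeasY (i : ℕ))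
  rw [h1, h2, ← Measure.map_apply htupleX hA, ← Measure.map_apply htupleY hA,
    map_tuple_eq_pi P X hmeas hindep u,
    map_tuple_eq_pi P (fun n ω => -X n ω) hmeasY hindepY u]
  have hpi : (fun i : u => Measure.map (X (i : ℕ)) P)
      = fun i : u => Measure.map (fun ω => -X (i : ℕ) ω) P :=
    funext fun i => (map_neg_eq P X hmeas hdist (i : ℕ)).symm
  rw [hpi]

/-- The event that partial sums tend to `atTop` is a tail event. -/
lemma aplus_tail (hmeas : ∀ n, Measurable (X n)) :
    MeasurableSet[Filter.limsup
        (fun n => MeasurableSpace.comap (X n) inferInstance) atTop]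
      {ω | Tendsto (fun n => ∑ i ∈ Finset.range n, X i ω) atTop atTop} := by
  rw [Filter.limsup_eq_iInf_iSup_of_nat, MeasurableSpace.measurableSet_iInf]
  intro m
  have hXi : ∀ i, m ≤ i → Measurable[⨆ i ≥ m, MeasurableSpace.comap (X i) inferInstance]
      (X i) := by
    intro i hi
    refine Measurable.of_comap_le ?_
    exact le_iSup₂ (f := fun i (_ : i ≥ m) => MeasurableSpace.comap (X i) inferInstance) i hi
  have hu : ∀ n, Measurable[⨆ i ≥ m, MeasurableSpace.comap (X i) inferInstance]
      (fun ω => ∑ i ∈ Finset.Ico m n, X i ω) := by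
    intro n
    apply Finset.measurable_sum
    intro i hi
    exact hXi i (Finset.mem_Ico.mp hi).1
  have heq : {ω | Tendsto (fun n => ∑ i ∈ Finset.range n, X i ω) atTop atTop}
      = {ω | Tendsto (fun n => ∑ i ∈ Finset.Ico m n, X i ω) atTop atTop} := by
    ext ω
    simp only [Set.mem_setOf_eq]
    have hev : ∀ᶠ n in atTop, (∑ i ∈ Finset.range n, X i ω)
        = (∑ i ∈ Finset.range m, X i ω) + ∑ i ∈ Finset.Ico m n, X i ω := by
      filter_upwards [eventually_ge_atTop m] with n hn
      rw [Finset.range_eq_Ico, Finset.range_eq_Ico]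
      exact (Finset.sum_Ico_consecutive (fun i => X i ω) (Nat.zero_le m) hn).symm
    constructor
    · intro h
      have h2 : Tendsto (fun n => (∑ i ∈ Finset.range n, X i ω)
          + (-(∑ i ∈ Finset.range m, X i ω))) atTop atTop :=
        tendsto_atTop_add_const_right atTop _ h
      apply h2.congr'
      filter_upwards [hev] with n hn
      rw [hn]; ring
    · intro h
      have h2 := tendsto_atTop_add_const_left atTop (∑ i ∈ Finset.range m, X i ω) h
      apply h2.congr'
      filter_upwards [hev] with n hn
      rw [hn]
  rw [heq]
  exact measurableSet_tendsto_atTop'' _ hu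

end Prob
set_option maxHeartbeats 1000000 in
/-- Almost surely there are infinitely many times `n` at which the favourite
site of a simple symmetric random walk is unique. -/
theorem unique_favourite_infinitely_often
    {Ω : Type*} [MeasurableSpace Ω] (P : Measure Ω) [IsProbabilityMeasure P]
    (X : ℕ → Ω → ℤ) (hmeas : ∀ n, Measurable (X n))
    (hindep : iIndepFun X P)
    (hdist : ∀ n, P {ω | X n ω = 1} = 1/2 ∧ P {ω | X n ω = -1} = 1/2)
    (S : ℕ → Ω → ℤ) (hS : ∀ n ω, S n ω = ∑ i ∈ Finset.range n, X i ω) :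
    ∀ᵐ ω ∂P, {n : ℕ | (favSites (fun k => S k ω) n).ncard = 1}.Infinite := by
  -- a.s. the steps are ±1
  have hpm : ∀ᵐ ω ∂P, ∀ n, X n ω = 1 ∨ X n ω = -1 := by
    rw [MeasureTheory.ae_all_iff]
    intro n
    have h1 : MeasurableSet {ω | X n ω = 1} := (hmeas n) (measurableSet_singleton 1)
    have h2 : MeasurableSet {ω | X n ω = -1} := (hmeas n) (measurableSet_singleton (-1))
    have hdisj : Disjoint {ω | X n ω = 1} {ω | X n ω = -1} := by
      rw [Set.disjoint_left]
      intro ω hω1 hω2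
      simp only [Set.mem_setOf_eq] at hω1 hω2
      omega
    have hunion : P ({ω | X n ω = 1} ∪ {ω | X n ω = -1}) = 1 := by
      rw [measure_union hdisj h2, (hdist n).1, (hdist n).2, one_div]
      exact ENNReal.inv_two_add_inv_two
    have hcompl : P ({ω | X n ω = 1} ∪ {ω | X n ω = -1})ᶜ = 0 := by
      rw [measure_compl (h1.union h2) (measure_ne_top _ _), hunion, measure_univ]
      simp
    rw [measure_eq_zero_iff_ae_notMem] at hcompl
    filter_upwards [hcompl] with ω hω
    simp only [Set.mem_compl_iff, Set.mem_union, Set.mem_setOf_eq, not_or, not_not] at hω ⊢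
    tauto
  -- the two events
  set Aplus : Set Ω := {ω | Tendsto (fun n => ∑ i ∈ Finset.range n, X i ω) atTop atTop}
    with hAplus_def
  set Aminus : Set Ω := {ω | Tendsto (fun n => ∑ i ∈ Finset.range n, -X i ω) atTop atTop}
    with hAminus_def
  have hmeasY : ∀ n, Measurable (fun ω => -X n ω) := fun n => (hmeas n).neg
  have hAplus_meas : MeasurableSet Aplus :=
    measurableSet_tendsto_atTop'' _ (fun n => Finset.measurable_sum _ fun i _ => hmeas i)
  have hAminus_meas : MeasurableSet Aminus :=
    measurableSet_tendsto_atTop'' _ (fun n => Finset.measurable_sum _ fun i _ => hmeasY i)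
  -- symmetry : P Aminus = P Aplus
  have hsym : P Aminus = P Aplus := by
    set Bplus : Set (ℕ → ℤ) :=
      {f | Tendsto (fun n => ∑ i ∈ Finset.range n, f i) atTop atTop} with hB_def
    have hBmeas : MeasurableSet Bplus :=
      measurableSet_tendsto_atTop'' (fun n (f : ℕ → ℤ) => ∑ i ∈ Finset.range n, f i)
        (fun n => Finset.measurable_sum _ fun i _ => measurable_pi_apply i)
    have hφ : Measurable (fun ω (n : ℕ) => X n ω) := measurable_pi_lambda _ hmeas
    have hψ : Measurable (fun ω (n : ℕ) => -X n ω) := measurable_pi_lambda _ hmeasY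
    have e1 : Aplus = (fun ω (n : ℕ) => X n ω) ⁻¹' Bplus := rfl
    have e2 : Aminus = (fun ω (n : ℕ) => -X n ω) ⁻¹' Bplus := rfl
    rw [e1, e2, ← Measure.map_apply hφ hBmeas, ← Measure.map_apply hψ hBmeas,
      map_path_symm P X hmeas hindep hdist]
  -- Kolmogorov 0-1 law for Aplus
  have h01 : P Aplus = 0 ∨ P Aplus = 1 :=
    measure_zero_or_one_of_measurableSet_limsup_atTop
      (fun n => (hmeas n).comap_le)
      ((iIndepFun_iff_iIndep _ _ _).mp hindep)
      (aplus_tail X hmeas)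
  -- Aplus and Aminus are disjoint
  have hdisjPM : Aplus ∩ Aminus = ∅ := by
    rw [Set.eq_empty_iff_forall_notMem]
    rintro ω ⟨h1, h2⟩
    simp only [hAplus_def, hAminus_def, Set.mem_setOf_eq] at h1 h2
    have h2' : Tendsto (fun n => ∑ i ∈ Finset.range n, X i ω) atTop atBot := by
      rw [← tendsto_neg_atTop_iff]
      apply h2.congr
      intro n
      rw [Finset.sum_neg_distrib]
    obtain ⟨n, hn1, hn2⟩ := ((h1.eventually_ge_atTop 1).and (h2'.eventually_le_atBot 0)).exists
    omega
  -- hence both are null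
  have hAplus0 : P Aplus = 0 := by
    rcases h01 with h | h
    · exact h
    · exfalso
      have hsub : Aplus ⊆ Aminusᶜ := by
        rw [Set.subset_compl_iff_disjoint_right, Set.disjoint_iff_inter_eq_empty]
        exact hdisjPM
      have hle : P Aplus ≤ P Aminusᶜ := measure_mono hsub
      rw [h, measure_compl hAminus_meas (measure_ne_top _ _), measure_univ, hsym, h] at hle
      simp at hle
  have hAminus0 : P Aminus = 0 := hsym.trans hAplus0
  rw [measure_eq_zero_iff_ae_notMem] at hAplus0 hAminus0
  -- conclusion
  filter_upwards [hpm, hAplus0, hAminus0] with ω hω hnp hnm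
  apply det_main
  by_contra hno
  push_neg at hno
  have hfun : (fun k => S k ω) = fun k => ∑ i ∈ Finset.range k, X i ω :=
    funext fun k => hS k ω
  have hstep : ∀ n, S (n+1) ω - S n ω = 1 ∨ S (n+1) ω - S n ω = -1 := by
    intro n
    have : S (n+1) ω - S n ω = X n ω := by
      rw [hS, hS, Finset.sum_range_succ]
      ring
    rw [this]
    exact hω n
  rcases coverage (fun k => S k ω) hstep (fun x => Set.not_infinite.mpr (hno x)) with h | h
  · rw [hfun] at h
    exact hnp h
  · apply hnm
    simp only [hAminus_def, Set.mem_setOf_eq]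
    have h' : Tendsto (fun n => -(∑ i ∈ Finset.range n, X i ω)) atTop atTop := by
      rw [tendsto_neg_atTop_iff, ← hfun]
      exact h
    apply h'.congr
    intro n
    rw [Finset.sum_neg_distrib]
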